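/- Let G be a bridgeless connected finite multigraph and e an edge of G joining u₁ and u₂ such that G − e is separable. Suppose H₁ and H₂ are edge-disjoint subgraphs of G − e with E(H₁) ∪ E(H₂) = E(G − e), V(H₁) ∪ V(H₂) = V(G), V(H₁) ∩ V(H₂) = {v} for some vertex v of G, and uᵢ ∈ V(Hᵢ) for i = 1,2. Let Gᵢ = Hᵢ + v uᵢ (the graph obtained from Hᵢ by adding a new edge joining v and uᵢ) for i = 1,2. Then (q − 1)·F(G,q) = F(G₁,q)·F(G₂,q) as polynomials in q. -/

import Mathlib

/-- A finite multigraph on vertex type `V` with edge type `E`: each edge `e` has two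
(possibly equal) endpoints `fst e` and `snd e`. -/
structure Multigraph (V E : Type) where
  fst : E → V
  snd : E → V

namespace Multigraph

variable {V E : Type}

/-- `a` and `b` are joined by some edge belonging to the edge set `F`. -/
def edgeRelOn (G : Multigraph V E) (F : Set E) (a b : V) : Prop :=
  ∃ e ∈ F, (G.fst e = a ∧ G.snd e = b) ∨ (G.fst e = b ∧ G.snd e = a)

/-- Reachability in the spanning subgraph `(V, F)`. -/
def Reach (G : Multigraph V E) (F : Set E) : V → V → Prop :=
  Relation.EqvGen (G.edgeRelOn F)

/-- The setoid on `V` whose classes are the connected components of the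
spanning subgraph `(V, F)`. -/
def reachSetoid (G : Multigraph V E) (F : Set E) : Setoid V :=
  Relation.EqvGen.setoid (G.edgeRelOn F)

/-- The number of connected components of the spanning subgraph `(V, F)`. -/
noncomputable def ncomp (G : Multigraph V E) (F : Set E) : ℕ :=
  Nat.card (Quotient (G.reachSetoid F))

/-- The number of connected components of `G`. -/
noncomputable def numComponents (G : Multigraph V E) : ℕ :=
  G.ncomp Set.univ

/-- `G` is connected. -/
def Connected (G : Multigraph V E) : Prop :=
  G.numComponents = 1

/-- An edge is a bridge if deleting it increases the number of connected components. -/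
def IsBridge (G : Multigraph V E) (e : E) : Prop :=
  G.numComponents < G.ncomp {e' | e' ≠ e}

/-- `G` has no bridge. -/
def Bridgeless (G : Multigraph V E) : Prop :=
  ∀ e, ¬ G.IsBridge e

/-- `G` has no loops. -/
def Loopless (G : Multigraph V E) : Prop :=
  ∀ e, G.fst e ≠ G.snd e

/-- Deleting a set `S` of vertices (and all edges meeting `S`). -/
def deleteVerts (G : Multigraph V E) (S : Set V) :
    Multigraph {v // v ∉ S} {e // G.fst e ∉ S ∧ G.snd e ∉ S} where
  fst := fun e => ⟨G.fst e.1, e.2.1⟩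
  snd := fun e => ⟨G.snd e.1, e.2.2⟩

/-- A cut-vertex: a vertex whose deletion increases the number of components. -/
def IsCutVertex (G : Multigraph V E) (x : V) : Prop :=
  G.numComponents < (G.deleteVerts {x}).numComponents

/-- A graph is non-separable if it has at most one vertex and at most one edge, or it is
connected, loopless and has no cut-vertex. -/
def NonSeparable (G : Multigraph V E) : Prop :=
  (Nat.card V ≤ 1 ∧ Nat.card E ≤ 1) ∨
    (G.Connected ∧ G.Loopless ∧ ∀ x, ¬ G.IsCutVertex x)

/-- The degree of a vertex, counted with edge multiplicity; a loop contributes `2`. -/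
noncomputable def degree (G : Multigraph V E) (v : V) : ℕ :=
  Nat.card {e | G.fst e = v} + Nat.card {e | G.snd e = v}

/-- The flow polynomial `F(G,q) = ∑_{E'⊆E} (−1)^{|E|−|E'|} q^{|E'|+c(E')−|V|}`,
where `c(E')` is the number of connected components of the spanning subgraph `(V,E')`. -/
noncomputable def flowPoly (G : Multigraph V E) [Finite V] [Finite E] : Polynomial ℝ :=
  letI : Fintype E := Fintype.ofFinite E
  ∑ E' : Finset E, (-1 : Polynomial ℝ) ^ (Nat.card E - E'.card) *
    Polynomial.X ^ (E'.card + G.ncomp ↑E' - Nat.card V)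

/-- A subgraph of a multigraph: a set of vertices and a set of edges with both
endpoints among those vertices. -/
structure Subgraph (G : Multigraph V E) where
  verts : Set V
  edges : Set E
  fst_mem : ∀ ⦃e⦄, e ∈ edges → G.fst e ∈ verts
  snd_mem : ∀ ⦃e⦄, e ∈ edges → G.snd e ∈ verts

/-- A subgraph, viewed as a multigraph in its own right. -/
def Subgraph.toMultigraph {G : Multigraph V E} (H : G.Subgraph) :
    Multigraph H.verts H.edges where
  fst := fun e => ⟨G.fst e.1, H.fst_mem e.2⟩
  snd := fun e => ⟨G.snd e.1, H.snd_mem e.2⟩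

/-- `H` is a connected component of `G`: its vertex set is the set of vertices reachable
from some vertex, and its edges are all the edges of `G` joining its vertices. -/
def IsComponent {G : Multigraph V E} (H : G.Subgraph) : Prop :=
  (∃ v ∈ H.verts, ∀ u, u ∈ H.verts ↔ G.Reach Set.univ v u) ∧
    ∀ e, e ∈ H.edges ↔ (G.fst e ∈ H.verts ∧ G.snd e ∈ H.verts)

/-- `H` is a block of `G`: a maximal non-separable subgraph. -/
def IsBlock {G : Multigraph V E} (H : G.Subgraph) : Prop :=
  H.toMultigraph.NonSeparable ∧
    ∀ H' : G.Subgraph, H'.toMultigraph.NonSeparable →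
      H.verts ⊆ H'.verts → H.edges ⊆ H'.edges → H' = H

/-- A trivial block: a single vertex and no edges. -/
def Subgraph.IsTrivial {G : Multigraph V E} (H : G.Subgraph) : Prop :=
  (∃ v, H.verts = {v}) ∧ H.edges = ∅

/-- An orientation of a multigraph: each edge is given a tail and a head,
consistent with its two endpoints. -/
structure Orientation (G : Multigraph V E) where
  tail : E → V
  head : E → V
  consistent : ∀ e, (tail e = G.fst e ∧ head e = G.snd e) ∨
    (tail e = G.snd e ∧ head e = G.fst e)

open Classical in
/-- A `Γ`-flow on an orientation `D`: at every vertex, the sum of the values on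
the arcs with that tail equals the sum of the values on the arcs with that head. -/
noncomputable def Orientation.IsFlow {G : Multigraph V E} [Fintype E]
    (D : G.Orientation) {Γ : Type} [AddCommGroup Γ] (φ : E → Γ) : Prop :=
  ∀ v : V, ∑ e ∈ Finset.univ.filter (fun e => D.tail e = v), φ e =
    ∑ e ∈ Finset.univ.filter (fun e => D.head e = v), φ e

/-- Deleting an edge. -/
def deleteEdge (G : Multigraph V E) (e₀ : E) : Multigraph V {e // e ≠ e₀} where
  fst := fun e => G.fst e.1
  snd := fun e => G.snd e.1

/-- Adding a new edge joining `x` and `y`. -/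
def addEdge (G : Multigraph V E) (x y : V) : Multigraph V (E ⊕ Unit) where
  fst := Sum.elim G.fst fun _ => x
  snd := Sum.elim G.snd fun _ => y

/-- Contracting a set `F` of edges: vertices joined through `F` are identified,
and the edges of `F` are removed. -/
def contract (G : Multigraph V E) (F : Set E) :
    Multigraph (Quotient (G.reachSetoid F)) {e // e ∉ F} where
  fst := fun e => Quotient.mk _ (G.fst e.1)
  snd := fun e => Quotient.mk _ (G.snd e.1)

/-- The number of proper colourings of the vertices of `G` with `n` colours. -/
noncomputable def properColorings (G : Multigraph V E) (n : ℕ) : ℕ :=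
  Nat.card {f : V → Fin n // ∀ e, f (G.fst e) ≠ f (G.snd e)}

/-- An isomorphism of multigraphs. -/
structure Iso {V' E' : Type} (G : Multigraph V E) (G' : Multigraph V' E') where
  vmap : V ≃ V'
  emap : E ≃ E'
  ends : ∀ e, (G'.fst (emap e) = vmap (G.fst e) ∧ G'.snd (emap e) = vmap (G.snd e)) ∨
    (G'.fst (emap e) = vmap (G.snd e) ∧ G'.snd (emap e) = vmap (G.fst e))

open Classical in
/-- Subdividing the edge `e₀`: it is replaced by a path of length two through a new vertex. -/
noncomputable def subdivide (G : Multigraph V E) (e₀ : E) :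
    Multigraph (V ⊕ Unit) (E ⊕ Unit) where
  fst := Sum.elim (fun e => Sum.inl (G.fst e)) fun _ => Sum.inr ()
  snd := Sum.elim (fun e => if e = e₀ then Sum.inr () else Sum.inl (G.snd e))
    fun _ => Sum.inl (G.snd e₀)

/-- `G` is a subdivision of `H`. -/
inductive IsSubdivisionOf :
    {V E V' E' : Type} → Multigraph V E → Multigraph V' E' → Prop
  | of_iso {V E V' E'} {G : Multigraph V E} {H : Multigraph V' E'} :
      Iso G H → IsSubdivisionOf G H
  | step {V E V' E'} {G : Multigraph V E} {H : Multigraph V' E'} (e : E) :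
      IsSubdivisionOf G H → IsSubdivisionOf (G.subdivide e) H
  | iso_left {V₁ E₁ V₂ E₂ V' E'} {G₁ : Multigraph V₁ E₁} {G₂ : Multigraph V₂ E₂}
      {H : Multigraph V' E'} :
      Iso G₁ G₂ → IsSubdivisionOf G₂ H → IsSubdivisionOf G₁ H

/-- A multigraph is 3-connected if it has at least 4 vertices and remains connected
after deleting any set of fewer than 3 vertices. -/
def ThreeConnected (G : Multigraph V E) : Prop :=
  4 ≤ Nat.card V ∧ ∀ S : Set V, S.ncard < 3 → (G.deleteVerts S).Connected

/-- `G` is (isomorphic to) the multigraph `Z_k` with two vertices joined by `k`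
parallel edges. -/
def IsZk (G : Multigraph V E) (k : ℕ) : Prop :=
  Nat.card V = 2 ∧ Nat.card E = k ∧ G.Loopless

/-- `G` is essentially 3-connected: a subdivision of a 3-connected graph,
or `Z_k` for some `k ≥ 3`. -/
def EssentiallyThreeConnected (G : Multigraph V E) : Prop :=
  (∃ (V' E' : Type) (H : Multigraph V' E'), H.ThreeConnected ∧ G.IsSubdivisionOf H) ∨
    ∃ k, 3 ≤ k ∧ G.IsZk k

end Multigraph


section Aux
open Multigraph Relation

variable {V E E' : Type}

lemma reach_refl (G : Multigraph V E) (F : Set E) (x : V) : G.Reach F x x := EqvGen.refl x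
lemma reach_symm (G : Multigraph V E) {F : Set E} {x y : V} (h : G.Reach F x y) :
    G.Reach F y x := EqvGen.symm x y h
lemma reach_trans (G : Multigraph V E) {F : Set E} {x y z : V} (h : G.Reach F x y)
    (h' : G.Reach F y z) : G.Reach F x z := EqvGen.trans x y z h h'

lemma reach_of_edge (G : Multigraph V E) {F : Set E} {f : E} (hf : f ∈ F) :
    G.Reach F (G.fst f) (G.snd f) :=
  EqvGen.rel _ _ ⟨f, hf, Or.inl ⟨rfl, rfl⟩⟩

lemma reach_mono (G : Multigraph V E) {F F' : Set E} (h : F ⊆ F') {x y : V}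
    (hr : G.Reach F x y) : G.Reach F' x y :=
  Relation.EqvGen.mono (fun a b ⟨f, hf, hor⟩ => ⟨f, h hf, hor⟩) _ _ hr

lemma reach_comm (G : Multigraph V E) (F : Set E) (x y : V) :
    G.Reach F x y ↔ G.Reach F y x :=
  ⟨fun h => Relation.EqvGen.symm x y h, fun h => Relation.EqvGen.symm y x h⟩

lemma quot_eq_iff (G : Multigraph V E) (F : Set E) (x y : V) :
    (Quotient.mk (G.reachSetoid F) x = Quotient.mk (G.reachSetoid F) y) ↔ G.Reach F x y := by
  rw [Quotient.eq]
  rfl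

lemma reachSetoid_congr (G : Multigraph V E) (G' : Multigraph V E') {F : Set E} {F' : Set E'}
    (h : ∀ x y, G.edgeRelOn F x y ↔ G'.edgeRelOn F' x y) :
    G.reachSetoid F = G'.reachSetoid F' :=
  Setoid.ext fun x y =>
    ⟨fun hr => Relation.EqvGen.mono (fun a b hab => (h a b).1 hab) _ _ hr,
     fun hr => Relation.EqvGen.mono (fun a b hab => (h a b).2 hab) _ _ hr⟩

lemma ncomp_congr (G : Multigraph V E) (G' : Multigraph V E') {F : Set E} {F' : Set E'}
    (h : ∀ x y, G.edgeRelOn F x y ↔ G'.edgeRelOn F' x y) :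
    G.ncomp F = G'.ncomp F' := by
  unfold Multigraph.ncomp
  rw [reachSetoid_congr G G' h]

lemma reach_congr (G : Multigraph V E) (G' : Multigraph V E') {F : Set E} {F' : Set E'}
    (h : ∀ x y, G.edgeRelOn F x y ↔ G'.edgeRelOn F' x y) (x y : V) :
    G.Reach F x y ↔ G'.Reach F' x y :=
  ⟨fun hr => Relation.EqvGen.mono (fun a b hab => (h a b).1 hab) _ _ hr,
   fun hr => Relation.EqvGen.mono (fun a b hab => (h a b).2 hab) _ _ hr⟩

/-- Key structural lemma: reachability after inserting one edge. -/
lemma reach_insert_iff (G : Multigraph V E) (F : Set E) (f : E) (x y : V) :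
    G.Reach (insert f F) x y ↔ G.Reach F x y ∨
      (G.Reach F x (G.fst f) ∧ G.Reach F (G.snd f) y) ∨
      (G.Reach F x (G.snd f) ∧ G.Reach F (G.fst f) y) := by
  set a := G.fst f with ha
  set b := G.snd f with hb
  constructor
  · intro h
    set Q : V → V → Prop := fun x y => G.Reach F x y ∨
      (G.Reach F x a ∧ G.Reach F b y) ∨ (G.Reach F x b ∧ G.Reach F a y) with hQ
    have hQequiv : Equivalence Q := by
      constructor
      · intro z; exact Or.inl (reach_refl G F z)
      · rintro p q (h1 | ⟨h1, h2⟩ | ⟨h1, h2⟩)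
        · exact Or.inl (reach_symm G h1)
        · exact Or.inr (Or.inr ⟨reach_symm G h2, reach_symm G h1⟩)
        · exact Or.inr (Or.inl ⟨reach_symm G h2, reach_symm G h1⟩)
      · rintro p q r (h1 | ⟨h1, h2⟩ | ⟨h1, h2⟩) (h3 | ⟨h3, h4⟩ | ⟨h3, h4⟩)
        · exact Or.inl (reach_trans G h1 h3)
        · exact Or.inr (Or.inl ⟨reach_trans G h1 h3, h4⟩)
        · exact Or.inr (Or.inr ⟨reach_trans G h1 h3, h4⟩)
        · exact Or.inr (Or.inl ⟨h1, reach_trans G h2 h3⟩)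
        · exact Or.inl (reach_trans G (reach_trans G h1 (reach_trans G (reach_symm G h3)
            (reach_symm G h2))) h4)
        · exact Or.inl (reach_trans G h1 h4)
        · exact Or.inr (Or.inr ⟨h1, reach_trans G h2 h3⟩)
        · exact Or.inl (reach_trans G h1 h4)
        · exact Or.inl (reach_trans G h1 (reach_trans G (reach_symm G h3)
            (reach_trans G (reach_symm G h2) h4)))
    have hsub : ∀ p q, G.edgeRelOn (insert f F) p q → Q p q := by
      rintro p q ⟨g, hg, hor⟩
      rcases Set.mem_insert_iff.1 hg with rfl | hgF
      · rcases hor with ⟨h1, h2⟩ | ⟨h1, h2⟩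
        · subst h1; subst h2
          exact Or.inr (Or.inl ⟨reach_refl G F _, reach_refl G F _⟩)
        · subst h1; subst h2
          exact Or.inr (Or.inr ⟨reach_refl G F _, reach_refl G F _⟩)
      · exact Or.inl (EqvGen.rel _ _ ⟨g, hgF, hor⟩)
    have := Relation.EqvGen.mono hsub _ _ h
    rwa [hQequiv.eqvGen_eq] at this
  · have hm : F ⊆ insert f F := Set.subset_insert f F
    have hab : G.Reach (insert f F) a b := reach_of_edge G (Set.mem_insert f F)
    rintro (h1 | ⟨h1, h2⟩ | ⟨h1, h2⟩)
    · exact reach_mono G hm h1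
    · exact reach_trans G (reach_mono G hm h1) (reach_trans G hab (reach_mono G hm h2))
    · exact reach_trans G (reach_mono G hm h1)
        (reach_trans G (reach_symm G hab) (reach_mono G hm h2))

end Aux

section Aux2
open Multigraph Relation

variable {V E : Type}

lemma reach_empty_iff (G : Multigraph V E) (x y : V) :
    G.Reach (∅ : Set E) x y ↔ x = y := by
  constructor
  · intro h
    induction h with
    | rel p q hpq => obtain ⟨g, hg, _⟩ := hpq; exact absurd hg (Set.notMem_empty g)
    | refl => rfl
    | symm p q _ ih => exact ih.symm
    | trans p q r _ _ ih1 ih2 => exact ih1.trans ih2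
  · rintro rfl; exact reach_refl G _ x

lemma ncomp_empty (G : Multigraph V E) : G.ncomp (∅ : Set E) = Nat.card V := by
  unfold Multigraph.ncomp
  refine Nat.card_congr (Equiv.symm (Equiv.ofBijective (Quotient.mk _) ⟨?_, ?_⟩))
  · intro x y hxy
    exact (reach_empty_iff G x y).1 (Quotient.exact hxy)
  · exact Quotient.exists_rep

lemma ncomp_insert_of_reach (G : Multigraph V E) (F : Set E) (f : E)
    (h : G.Reach F (G.fst f) (G.snd f)) :
    G.ncomp (insert f F) = G.ncomp F := by
  unfold Multigraph.ncomp
  have hset : G.reachSetoid (insert f F) = G.reachSetoid F := by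
    refine Setoid.ext fun x y => ?_
    show G.Reach (insert f F) x y ↔ G.Reach F x y
    rw [reach_insert_iff]
    constructor
    · rintro (h1 | ⟨h1, h2⟩ | ⟨h1, h2⟩)
      · exact h1
      · exact reach_trans G h1 (reach_trans G h (reach_trans G (reach_symm G h)
          (reach_trans G h h2)))
      · exact reach_trans G h1 (reach_trans G (reach_symm G h) h2)
    · exact fun h1 => Or.inl h1
  rw [hset]

lemma ncomp_insert_of_not_reach [Finite V] (G : Multigraph V E) (F : Set E) (f : E)
    (h : ¬ G.Reach F (G.fst f) (G.snd f)) :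
    G.ncomp F = G.ncomp (insert f F) + 1 := by
  classical
  set a := G.fst f with ha
  set b := G.snd f with hb
  set s := G.reachSetoid F with hs
  set s' := G.reachSetoid (insert f F) with hs'
  have hle : ∀ x y : V, G.Reach F x y → G.Reach (insert f F) x y :=
    fun x y => reach_mono G (Set.subset_insert f F)
  have hwd : ∀ x y : V, G.Reach (insert f F) x y →
      (if G.Reach F x b then (Quotient.mk s a) else Quotient.mk s x) =
      (if G.Reach F y b then (Quotient.mk s a) else Quotient.mk s y) := by
    intro x y hxy
    rcases (reach_insert_iff G F f x y).1 hxy with h1 | ⟨h1, h2⟩ | ⟨h1, h2⟩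
    · by_cases hxb : G.Reach F x b
      · rw [if_pos hxb, if_pos (reach_trans G (reach_symm G h1) hxb)]
      · rw [if_neg hxb, if_neg (fun hyb => hxb (reach_trans G h1 hyb)),
          (quot_eq_iff G F x y).2 h1]
    · -- x ~ a, b ~ y
      have hxb : ¬ G.Reach F x b := fun hxb => h (reach_trans G (reach_symm G h1) hxb)
      rw [if_neg hxb, if_pos (reach_symm G h2), (quot_eq_iff G F x a).2 h1]
    · -- x ~ b, a ~ y
      have hyb : ¬ G.Reach F y b := fun hyb => h (reach_trans G h2 hyb)
      rw [if_pos h1, if_neg hyb, (quot_eq_iff G F a y).2 h2]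
  let q : Quotient s → Quotient s' := Quotient.map' id hle
  let g : Quotient s' → Quotient s :=
    Quotient.lift (fun x => if G.Reach F x b then (Quotient.mk s a) else Quotient.mk s x) hwd
  have hq : ∀ x : V, q (Quotient.mk s x) = Quotient.mk s' x := fun x => rfl
  have e2 : {y : Quotient s // y ≠ Quotient.mk s b} ≃ Quotient s' := by
    refine ⟨fun y => q y.1, fun z => ⟨g z, ?_⟩, ?_, ?_⟩
    · induction z using Quotient.inductionOn with
      | h x =>
        show (if G.Reach F x b then (Quotient.mk s a) else Quotient.mk s x) ≠ _
        by_cases hxb : G.Reach F x b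
        · rw [if_pos hxb]
          exact fun hc => h ((quot_eq_iff G F a b).1 hc)
        · rw [if_neg hxb]
          exact fun hc => hxb ((quot_eq_iff G F x b).1 hc)
    · rintro ⟨y, hy⟩
      induction y using Quotient.inductionOn with
      | h x =>
        have hxb : ¬ G.Reach F x b := fun hxb => hy ((quot_eq_iff G F x b).2 hxb)
        refine Subtype.ext ?_
        show g (q (Quotient.mk s x)) = Quotient.mk s x
        rw [hq]
        show (if G.Reach F x b then (Quotient.mk s a) else Quotient.mk s x) = _
        rw [if_neg hxb]
    · intro z
      induction z using Quotient.inductionOn with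
      | h x =>
        show q (if G.Reach F x b then (Quotient.mk s a) else Quotient.mk s x) = _
        by_cases hxb : G.Reach F x b
        · rw [if_pos hxb, hq]
          refine (quot_eq_iff G (insert f F) a x).2 ?_
          refine reach_trans G (reach_of_edge G (Set.mem_insert f F)) ?_
          exact reach_symm G (hle x b hxb)
        · rw [if_neg hxb, hq]
  have e3 : Option {y : Quotient s // y ≠ Quotient.mk s b} ≃ Quotient s :=
    Equiv.optionSubtypeNe (Quotient.mk s b)
  have : Nat.card (Quotient s) = Nat.card {y : Quotient s // y ≠ Quotient.mk s b} + 1 := by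
    haveI : Finite (Quotient s) := Quotient.finite s
    rw [← Nat.card_congr e3, Nat.card_congr (Equiv.optionEquivSumPUnit.{0,0} _), Nat.card_sum]
    simp
  unfold Multigraph.ncomp
  rw [← hs, ← hs', this, Nat.card_congr e2]

lemma card_le_card_add_ncomp [Finite V] (G : Multigraph V E) [Fintype E] (A : Finset E) :
    Nat.card V ≤ A.card + G.ncomp ↑A := by
  classical
  induction A using Finset.induction_on with
  | empty => rw [Finset.coe_empty, ncomp_empty]; simp
  | @insert f A hfA ih =>
    rw [Finset.coe_insert, Finset.card_insert_of_notMem hfA]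
    by_cases hr : G.Reach ↑A (G.fst f) (G.snd f)
    · rw [ncomp_insert_of_reach G _ f hr]; omega
    · have := ncomp_insert_of_not_reach G ↑A f hr
      omega

end Aux2

section Glue
open Multigraph Relation

variable {V E : Type}

lemma glue_lemma [Finite V] (G : Multigraph V E) (H₁ H₂ : G.Subgraph) (v : V)
    (hvcover : H₁.verts ∪ H₂.verts = Set.univ)
    (hvint : H₁.verts ∩ H₂.verts = {v})
    (hv₁ : v ∈ H₁.verts) (hv₂ : v ∈ H₂.verts)
    (A₁ : Set ↥H₁.edges) (A₂ : Set ↥H₂.edges) :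
    (G.ncomp (Subtype.val '' A₁ ∪ Subtype.val '' A₂) + 1 =
      H₁.toMultigraph.ncomp A₁ + H₂.toMultigraph.ncomp A₂) ∧
    (∀ (u₁ u₂ : V) (hu₁ : u₁ ∈ H₁.verts) (hu₂ : u₂ ∈ H₂.verts),
      G.Reach (Subtype.val '' A₁ ∪ Subtype.val '' A₂) u₁ u₂ ↔
        (H₁.toMultigraph.Reach A₁ ⟨u₁, hu₁⟩ ⟨v, hv₁⟩ ∧
          H₂.toMultigraph.Reach A₂ ⟨v, hv₂⟩ ⟨u₂, hu₂⟩)) := by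
  classical
  set M₁ := H₁.toMultigraph with hM₁
  set M₂ := H₂.toMultigraph with hM₂
  set S : Set E := Subtype.val '' A₁ ∪ Subtype.val '' A₂ with hS
  set s₁ := M₁.reachSetoid A₁ with hs₁
  set s₂ := M₂.reachSetoid A₂ with hs₂
  have hmem : ∀ x : V, x ∉ H₁.verts → x ∈ H₂.verts := by
    intro x hx
    have hx2 : x ∈ H₁.verts ∪ H₂.verts := by rw [hvcover]; trivial
    rcases hx2 with h | h
    · exact absurd h hx
    · exact h
  have hvv : ∀ x : V, x ∈ H₁.verts → x ∈ H₂.verts → x = v := by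
    intro x h1 h2
    have hx : x ∈ H₁.verts ∩ H₂.verts := ⟨h1, h2⟩
    rw [hvint] at hx
    exact hx
  set qv : Quotient s₁ := Quotient.mk s₁ ⟨v, hv₁⟩ with hqv
  set φ : V → ({y : Quotient s₁ // y ≠ qv} ⊕ Quotient s₂) := fun x =>
    if hx : x ∈ H₁.verts then
      (if hr : M₁.Reach A₁ ⟨x, hx⟩ ⟨v, hv₁⟩ then Sum.inr (Quotient.mk s₂ ⟨v, hv₂⟩)
       else Sum.inl ⟨Quotient.mk s₁ ⟨x, hx⟩,
         fun hc => hr ((quot_eq_iff M₁ A₁ _ _).1 hc)⟩)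
    else Sum.inr (Quotient.mk s₂ ⟨x, hmem x hx⟩) with hφ
  -- transfers
  have t₁ : ∀ p q : ↥H₁.verts, M₁.Reach A₁ p q → G.Reach S p.1 q.1 := by
    intro p q h
    induction h with
    | rel p q hpq =>
      obtain ⟨g, hg, hor⟩ := hpq
      refine EqvGen.rel _ _ ⟨g.1, Or.inl ⟨g, hg, rfl⟩, ?_⟩
      rcases hor with ⟨h1, h2⟩ | ⟨h1, h2⟩
      · exact Or.inl ⟨congrArg Subtype.val h1, congrArg Subtype.val h2⟩
      · exact Or.inr ⟨congrArg Subtype.val h1, congrArg Subtype.val h2⟩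
    | refl p => exact reach_refl G S p.1
    | symm _ _ _ ih => exact reach_symm G ih
    | trans _ _ _ _ _ ih1 ih2 => exact reach_trans G ih1 ih2
  have t₂ : ∀ p q : ↥H₂.verts, M₂.Reach A₂ p q → G.Reach S p.1 q.1 := by
    intro p q h
    induction h with
    | rel p q hpq =>
      obtain ⟨g, hg, hor⟩ := hpq
      refine EqvGen.rel _ _ ⟨g.1, Or.inr ⟨g, hg, rfl⟩, ?_⟩
      rcases hor with ⟨h1, h2⟩ | ⟨h1, h2⟩
      · exact Or.inl ⟨congrArg Subtype.val h1, congrArg Subtype.val h2⟩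
      · exact Or.inr ⟨congrArg Subtype.val h1, congrArg Subtype.val h2⟩
    | refl p => exact reach_refl G S p.1
    | symm _ _ _ ih => exact reach_symm G ih
    | trans _ _ _ _ _ ih1 ih2 => exact reach_trans G ih1 ih2
  -- value lemmas
  have φV₂ : ∀ (x : V) (hx2 : x ∈ H₂.verts), φ x = Sum.inr (Quotient.mk s₂ ⟨x, hx2⟩) := by
    intro x hx2
    by_cases hx : x ∈ H₁.verts
    · have hpv : x = v := hvv x hx hx2
      have hpv' : (⟨x, hx⟩ : ↥H₁.verts) = ⟨v, hv₁⟩ := Subtype.ext hpv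
      simp only [hφ]
      rw [dif_pos hx, dif_pos (by rw [hpv']; exact reach_refl M₁ A₁ _)]
      have : (⟨x, hx2⟩ : ↥H₂.verts) = ⟨v, hv₂⟩ := Subtype.ext hpv
      rw [this]
    · simp only [hφ]
      rw [dif_neg hx]
  have φV₁ : ∀ p q : ↥H₁.verts, M₁.Reach A₁ p q → φ p.1 = φ q.1 := by
    intro p q h
    simp only [hφ]
    rw [dif_pos p.2, dif_pos q.2]
    by_cases hr : M₁.Reach A₁ ⟨p.1, p.2⟩ ⟨v, hv₁⟩
    · have hr' : M₁.Reach A₁ ⟨q.1, q.2⟩ ⟨v, hv₁⟩ := reach_trans M₁ (reach_symm M₁ h) hr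
      rw [dif_pos hr, dif_pos hr']
    · have hr' : ¬ M₁.Reach A₁ ⟨q.1, q.2⟩ ⟨v, hv₁⟩ := fun hc => hr (reach_trans M₁ h hc)
      rw [dif_neg hr, dif_neg hr']
      exact congrArg Sum.inl (Subtype.ext ((quot_eq_iff M₁ A₁ _ _).2 h))
  have step : ∀ x y : V, G.edgeRelOn S x y → φ x = φ y := by
    rintro x y ⟨g, hg, hor⟩
    rcases hg with ⟨g₁, hg₁, rfl⟩ | ⟨g₂, hg₂, rfl⟩
    · have hone := φV₁ _ _ (reach_of_edge M₁ hg₁)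
      rcases hor with ⟨h1, h2⟩ | ⟨h1, h2⟩
      · rw [← h1, ← h2]; exact hone
      · rw [← h1, ← h2]; exact hone.symm
    · have hone : φ (M₂.fst g₂).1 = φ (M₂.snd g₂).1 := by
        rw [φV₂ _ (M₂.fst g₂).2, φV₂ _ (M₂.snd g₂).2]
        exact congrArg Sum.inr ((quot_eq_iff M₂ A₂ _ _).2 (reach_of_edge M₂ hg₂))
      rcases hor with ⟨h1, h2⟩ | ⟨h1, h2⟩
      · rw [← h1, ← h2]; exact hone
      · rw [← h1, ← h2]; exact hone.symm
  have keyF : ∀ x y : V, G.Reach S x y → φ x = φ y := by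
    intro x y h
    have heq : Equivalence (fun a b : V => φ a = φ b) :=
      ⟨fun _ => rfl, Eq.symm, Eq.trans⟩
    exact heq.eqvGen_iff.1 (Relation.EqvGen.mono step _ _ h)
  have val : ∀ x : V,
      (∃ (hx : x ∈ H₁.verts) (c : {y : Quotient s₁ // y ≠ qv}),
        φ x = Sum.inl c ∧ c.1 = Quotient.mk s₁ ⟨x, hx⟩) ∨
      (∃ p : ↥H₂.verts, φ x = Sum.inr (Quotient.mk s₂ p) ∧ G.Reach S x p.1) := by
    intro x
    by_cases hx : x ∈ H₁.verts
    · by_cases hr : M₁.Reach A₁ ⟨x, hx⟩ ⟨v, hv₁⟩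
      · refine Or.inr ⟨⟨v, hv₂⟩, ?_, t₁ ⟨x, hx⟩ ⟨v, hv₁⟩ hr⟩
        simp only [hφ]
        rw [dif_pos hx, dif_pos hr]
      · refine Or.inl ⟨hx, ⟨Quotient.mk s₁ ⟨x, hx⟩,
          fun hc => hr ((quot_eq_iff M₁ A₁ _ _).1 hc)⟩, ?_, rfl⟩
        simp only [hφ]
        rw [dif_pos hx, dif_neg hr]
    · refine Or.inr ⟨⟨x, hmem x hx⟩, ?_, reach_refl G S x⟩
      simp only [hφ]
      rw [dif_neg hx]
  have keyB : ∀ x y : V, φ x = φ y → G.Reach S x y := by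
    intro x y h
    rcases val x with ⟨hx, c, hc, hc1⟩ | ⟨p, hp, hrp⟩ <;>
      rcases val y with ⟨hy, d, hd, hd1⟩ | ⟨q, hq, hrq⟩
    · rw [hc, hd] at h
      have hcd : c = d := Sum.inl.inj h
      have h2 : Quotient.mk s₁ (⟨x, hx⟩ : ↥H₁.verts) = Quotient.mk s₁ ⟨y, hy⟩ := by
        rw [← hc1, ← hd1, hcd]
      exact t₁ _ _ ((quot_eq_iff M₁ A₁ _ _).1 h2)
    · rw [hc, hq] at h; exact absurd h (by simp)
    · rw [hp, hd] at h; exact absurd h (by simp)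
    · rw [hp, hq] at h
      have h2 := (quot_eq_iff M₂ A₂ p q).1 (Sum.inr.inj h)
      exact reach_trans G hrp (reach_trans G (t₂ p q h2) (reach_symm G hrq))
  have hbij : Function.Bijective
      (Quotient.lift φ (fun x y h => keyF x y h) :
        Quotient (G.reachSetoid S) → ({y : Quotient s₁ // y ≠ qv} ⊕ Quotient s₂)) := by
    constructor
    · intro z w hzw
      induction z using Quotient.inductionOn with | h x => ?_
      induction w using Quotient.inductionOn with | h y => ?_
      exact (quot_eq_iff G S x y).2 (keyB x y hzw)
    · rintro (z | z)
      · obtain ⟨c, hc⟩ := z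
        obtain ⟨p, rfl⟩ := Quotient.exists_rep c
        have hr : ¬ M₁.Reach A₁ p ⟨v, hv₁⟩ := fun hr => hc ((quot_eq_iff M₁ A₁ _ _).2 hr)
        have hr' : ¬ M₁.Reach A₁ ⟨p.1, p.2⟩ ⟨v, hv₁⟩ := hr
        refine ⟨Quotient.mk _ p.1, ?_⟩
        show φ p.1 = _
        simp only [hφ]
        rw [dif_pos p.2, dif_neg hr']
      · obtain ⟨p, rfl⟩ := Quotient.exists_rep z
        exact ⟨Quotient.mk _ p.1, φV₂ p.1 p.2⟩
  have hcard : Nat.card (Quotient (G.reachSetoid S)) =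
      Nat.card ({y : Quotient s₁ // y ≠ qv} ⊕ Quotient s₂) :=
    Nat.card_congr (Equiv.ofBijective _ hbij)
  haveI : Finite (Quotient s₁) := Quotient.finite _
  haveI : Finite (Quotient s₂) := Quotient.finite _
  have hq1 : Nat.card (Quotient s₁) = Nat.card {y : Quotient s₁ // y ≠ qv} + 1 := by
    rw [← Nat.card_congr (Equiv.optionSubtypeNe qv),
      Nat.card_congr (Equiv.optionEquivSumPUnit.{0,0} _), Nat.card_sum]
    simp
  constructor
  · show Nat.card (Quotient (G.reachSetoid S)) + 1 = _ + _
    rw [hcard, Nat.card_sum]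
    show _ = Nat.card (Quotient s₁) + Nat.card (Quotient s₂)
    omega
  · intro u₁ u₂ hu₁ hu₂
    rw [show G.Reach S u₁ u₂ ↔ φ u₁ = φ u₂ from ⟨keyF u₁ u₂, keyB u₁ u₂⟩]
    rw [φV₂ u₂ hu₂]
    simp only [hφ]
    rw [dif_pos hu₁]
    by_cases hr : M₁.Reach A₁ ⟨u₁, hu₁⟩ ⟨v, hv₁⟩
    · rw [dif_pos hr]
      constructor
      · intro h; exact ⟨hr, (quot_eq_iff M₂ A₂ _ _).1 (Sum.inr.inj h)⟩
      · rintro ⟨_, h2⟩; exact congrArg Sum.inr ((quot_eq_iff M₂ A₂ _ _).2 h2)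
    · rw [dif_neg hr]
      constructor
      · intro h; exact absurd h (by simp)
      · rintro ⟨h1, _⟩; exact absurd h1 hr

end Glue

section Sums
open Multigraph Relation Polynomial

def finsetSumEquiv {α β : Type} : Finset (α ⊕ β) ≃ Finset α × Finset β where
  toFun A := (A.toLeft, A.toRight)
  invFun p := p.1.disjSum p.2
  left_inv A := Finset.toLeft_disjSum_toRight
  right_inv p := by
    ext <;> simp

lemma flowPoly_eq {V E : Type} [Finite V] [Fintype E] (G : Multigraph V E) :
    G.flowPoly = ∑ A : Finset E, (-1 : Polynomial ℝ) ^ (Fintype.card E - A.card) *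
      Polynomial.X ^ (A.card + G.ncomp ↑A - Nat.card V) := by
  unfold Multigraph.flowPoly
  have h : Fintype.ofFinite E = ‹Fintype E› := Subsingleton.elim _ _
  simp only [h, Nat.card_eq_fintype_card]
  exact Finset.sum_congr (congrArg (@Finset.univ (Finset E)) (Subsingleton.elim _ _)) fun _ _ => rfl

lemma univ_finset_unit : (Finset.univ : Finset (Finset Unit)) = {∅, {()}} := by decide

lemma disjSum_unit {α : Type} [DecidableEq α] (A : Finset α) :
    A.disjSum ({()} : Finset Unit) = insert (Sum.inr ()) (A.disjSum ∅) := by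
  ext x
  cases x <;> simp

lemma coe_disjSum_empty {α : Type} (A : Finset α) :
    (↑(A.disjSum (∅ : Finset Unit)) : Set (α ⊕ Unit)) = Sum.inl '' ↑A := by
  ext x
  cases x <;> simp

variable {V E : Type}

lemma addEdge_edgeRel_base (M : Multigraph V E) (x y : V) (A : Set E) (a b : V) :
    (M.addEdge x y).edgeRelOn (Sum.inl '' A) a b ↔ M.edgeRelOn A a b := by
  constructor
  · rintro ⟨f, ⟨g, hg, rfl⟩, hor⟩
    exact ⟨g, hg, hor⟩
  · rintro ⟨g, hg, hor⟩
    exact ⟨Sum.inl g, ⟨g, hg, rfl⟩, hor⟩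

lemma addEdge_ncomp_base (M : Multigraph V E) (x y : V) (A : Set E) :
    (M.addEdge x y).ncomp (Sum.inl '' A) = M.ncomp A :=
  ncomp_congr _ _ (addEdge_edgeRel_base M x y A)

lemma addEdge_reach_base (M : Multigraph V E) (x y : V) (A : Set E) (a b : V) :
    (M.addEdge x y).Reach (Sum.inl '' A) a b ↔ M.Reach A a b :=
  reach_congr _ _ (addEdge_edgeRel_base M x y A) a b

lemma addEdge_ncomp_insert_reach [Finite V] (M : Multigraph V E) (x y : V) (A : Set E)
    (h : M.Reach A x y) :
    (M.addEdge x y).ncomp (insert (Sum.inr ()) (Sum.inl '' A)) = M.ncomp A := by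
  have h' : (M.addEdge x y).Reach (Sum.inl '' A) ((M.addEdge x y).fst (Sum.inr ()))
      ((M.addEdge x y).snd (Sum.inr ())) := (addEdge_reach_base M x y A x y).2 h
  rw [ncomp_insert_of_reach _ _ _ h', addEdge_ncomp_base]

lemma addEdge_ncomp_insert_not_reach [Finite V] (M : Multigraph V E) (x y : V) (A : Set E)
    (h : ¬ M.Reach A x y) :
    M.ncomp A = (M.addEdge x y).ncomp (insert (Sum.inr ()) (Sum.inl '' A)) + 1 := by
  have h' : ¬ (M.addEdge x y).Reach (Sum.inl '' A) ((M.addEdge x y).fst (Sum.inr ()))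
      ((M.addEdge x y).snd (Sum.inr ())) := fun hc => h ((addEdge_reach_base M x y A x y).1 hc)
  rw [← addEdge_ncomp_base M x y A]
  exact ncomp_insert_of_not_reach _ _ _ h'

end Sums

section AddEdgePoly
open Multigraph Polynomial
open scoped Classical

lemma flowPoly_addEdge {V E : Type} [Finite V] [Fintype E] (M : Multigraph V E) (x y : V) :
    (M.addEdge x y).flowPoly = ∑ A : Finset E,
      (if M.Reach ↑A x y then
        (-1 : Polynomial ℝ) ^ (Fintype.card E - A.card) * (X - 1) *
          X ^ (A.card + M.ncomp ↑A - Nat.card V)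
      else 0) := by
  classical
  rw [flowPoly_eq]
  rw [← Equiv.sum_comp (finsetSumEquiv (α := E) (β := Unit)).symm]
  rw [Fintype.sum_prod_type]
  refine Finset.sum_congr rfl fun A _ => ?_
  have hsymm : ∀ U : Finset Unit, (finsetSumEquiv.symm (A, U)) = A.disjSum U := fun _ => rfl
  rw [univ_finset_unit, Finset.sum_insert (by decide), Finset.sum_singleton]
  simp only [hsymm]
  have hc1 : (A.disjSum (∅ : Finset Unit)).card = A.card := by
    simp [Finset.card_disjSum]
  have hc2 : (A.disjSum ({()} : Finset Unit)).card = A.card + 1 := by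
    simp [Finset.card_disjSum]
  have hcard : Fintype.card (E ⊕ Unit) = Fintype.card E + 1 := by simp
  have hn1 : (M.addEdge x y).ncomp ↑(A.disjSum (∅ : Finset Unit)) = M.ncomp ↑A := by
    rw [coe_disjSum_empty, addEdge_ncomp_base]
  have hins : (↑(A.disjSum ({()} : Finset Unit)) : Set (E ⊕ Unit)) =
      insert (Sum.inr ()) (Sum.inl '' ↑A) := by
    rw [disjSum_unit, Finset.coe_insert, coe_disjSum_empty]
  rw [hc1, hc2, hcard, hn1, hins]
  have ha : A.card ≤ Fintype.card E := by
    simpa using Finset.card_le_univ A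
  have hcn : Nat.card V ≤ A.card + M.ncomp ↑A := card_le_card_add_ncomp M A
  by_cases hr : M.Reach ↑A x y
  · rw [if_pos hr, addEdge_ncomp_insert_reach M x y ↑A hr]
    have e1 : Fintype.card E + 1 - A.card = (Fintype.card E - A.card) + 1 := by omega
    have e2 : A.card + 1 + M.ncomp ↑A - Nat.card V =
        (A.card + M.ncomp ↑A - Nat.card V) + 1 := by omega
    have e3 : Fintype.card E + 1 - (A.card + 1) = Fintype.card E - A.card := by omega
    rw [e1, e2, e3, pow_succ, pow_succ]
    ring
  · rw [if_neg hr]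
    have h2 := addEdge_ncomp_insert_not_reach M x y ↑A hr
    have e1 : A.card + 1 + (M.addEdge x y).ncomp (insert (Sum.inr ()) (Sum.inl '' ↑A)) -
        Nat.card V = A.card + M.ncomp ↑A - Nat.card V := by omega
    have e2 : Fintype.card E + 1 - A.card = (Fintype.card E - A.card) + 1 := by omega
    have e3 : Fintype.card E + 1 - (A.card + 1) = Fintype.card E - A.card := by omega
    rw [e1, e2, e3, pow_succ]
    ring

end AddEdgePoly

open Multigraph Polynomial in
/-- Jackson. If `G` is bridgeless and connected, `e` joins `u₁` and
`u₂`, `G − e` is separable, and `H₁, H₂` decompose `G − e` sharing only the vertex `v`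
with `uᵢ ∈ V(Hᵢ)`, then with `Gᵢ = Hᵢ + v uᵢ` one has
`(q − 1)·F(G,q) = F(G₁,q)·F(G₂,q)`. -/
theorem flowPoly_separable_decomposition {V E : Type} [Fintype V] [Fintype E]
    (G : Multigraph V E) (hbl : G.Bridgeless) (hconn : G.Connected)
    (e : E) (u₁ u₂ v : V)
    (hends : (G.fst e = u₁ ∧ G.snd e = u₂) ∨ (G.fst e = u₂ ∧ G.snd e = u₁))
    (hsep : ¬ (G.deleteEdge e).NonSeparable)
    (H₁ H₂ : G.Subgraph)
    (hedis : H₁.edges ∩ H₂.edges = ∅)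
    (hecover : H₁.edges ∪ H₂.edges = {e' | e' ≠ e})
    (hvcover : H₁.verts ∪ H₂.verts = Set.univ)
    (hvint : H₁.verts ∩ H₂.verts = {v})
    (hv₁ : v ∈ H₁.verts) (hv₂ : v ∈ H₂.verts)
    (hu₁ : u₁ ∈ H₁.verts) (hu₂ : u₂ ∈ H₂.verts) :
    (X - 1) * G.flowPoly =
      (H₁.toMultigraph.addEdge ⟨v, hv₁⟩ ⟨u₁, hu₁⟩).flowPoly *
        (H₂.toMultigraph.addEdge ⟨v, hv₂⟩ ⟨u₂, hu₂⟩).flowPoly := by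
  classical
  clear hbl hconn hsep
  haveI hF1 : Fintype ↥H₁.edges := Fintype.ofFinite _
  haveI hF2 : Fintype ↥H₂.edges := Fintype.ofFinite _
  set M₁ := H₁.toMultigraph with hM₁
  set M₂ := H₂.toMultigraph with hM₂
  -- membership facts
  have hne₁ : ∀ g : ↥H₁.edges, g.1 ≠ e := by
    intro g
    have hg : g.1 ∈ H₁.edges ∪ H₂.edges := Or.inl g.2
    rw [hecover] at hg
    exact hg
  have hne₂ : ∀ g : ↥H₂.edges, g.1 ≠ e := by
    intro g
    have hg : g.1 ∈ H₁.edges ∪ H₂.edges := Or.inr g.2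
    rw [hecover] at hg
    exact hg
  have hdisj : ∀ (g₁ : ↥H₁.edges) (g₂ : ↥H₂.edges), g₁.1 ≠ g₂.1 := by
    intro g₁ g₂ h
    have hg : g₁.1 ∈ H₁.edges ∩ H₂.edges := ⟨g₁.2, h ▸ g₂.2⟩
    rw [hedis] at hg
    exact hg
  -- the edge-type equivalence
  set f₀ : (↥H₁.edges ⊕ (↥H₂.edges ⊕ Unit)) → E :=
    Sum.elim Subtype.val (Sum.elim Subtype.val (fun _ => e)) with hf₀
  have hbij : Function.Bijective f₀ := by
    constructor
    · rintro (a | b | u) (a' | b' | u') h <;>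
        simp only [hf₀, Sum.elim_inl, Sum.elim_inr] at h
      · exact congrArg Sum.inl (Subtype.ext h)
      · exact absurd h (hdisj a b')
      · exact absurd h (hne₁ a)
      · exact absurd h.symm (hdisj a' b)
      · exact congrArg (fun t => Sum.inr (Sum.inl t)) (Subtype.ext h)
      · exact absurd h (hne₂ b)
      · exact absurd h.symm (hne₁ a')
      · exact absurd h.symm (hne₂ b')
      · rfl
    · intro x
      by_cases hx : x = e
      · exact ⟨Sum.inr (Sum.inr ()), hx.symm⟩
      · have hx2 : x ∈ H₁.edges ∪ H₂.edges := by rw [hecover]; exact hx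
        rcases hx2 with h | h
        · exact ⟨Sum.inl ⟨x, h⟩, rfl⟩
        · exact ⟨Sum.inr (Sum.inl ⟨x, h⟩), rfl⟩
  set e₀ : (↥H₁.edges ⊕ (↥H₂.edges ⊕ Unit)) ≃ E := Equiv.ofBijective f₀ hbij with he₀
  -- cardinality facts
  have hV : Nat.card ↥H₁.verts + Nat.card ↥H₂.verts = Nat.card V + 1 := by
    rw [Nat.card_coe_set_eq, Nat.card_coe_set_eq]
    have h := Set.ncard_union_add_ncard_inter H₁.verts H₂.verts
    rw [hvcover, hvint, Set.ncard_univ, Set.ncard_singleton] at h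
    omega
  have hE : Fintype.card ↥H₁.edges + Fintype.card ↥H₂.edges + 1 = Fintype.card E := by
    rw [← Nat.card_eq_fintype_card, ← Nat.card_eq_fintype_card, ← Nat.card_eq_fintype_card,
      Nat.card_coe_set_eq, Nat.card_coe_set_eq]
    have h := Set.ncard_union_add_ncard_inter H₁.edges H₂.edges
    rw [hecover, hedis, Set.ncard_empty] at h
    have h2 : ({e' | e' ≠ e} : Set E) = Set.univ \ {e} := by
      ext x; simp
    have h3 := Set.ncard_diff_singleton_add_one (Set.mem_univ e) (Set.finite_univ)
    rw [h2] at h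
    rw [Set.ncard_univ] at h3
    omega
  -- reachability of the endpoints of `e` vs `u₁ u₂`
  have hre : ∀ S : Set E, G.Reach S (G.fst e) (G.snd e) ↔ G.Reach S u₁ u₂ := by
    intro S
    rcases hends with ⟨h1, h2⟩ | ⟨h1, h2⟩ <;> rw [h1, h2]
    exact reach_comm G S u₂ u₁
  -- rewrite both sides
  rw [flowPoly_addEdge M₁ ⟨v, hv₁⟩ ⟨u₁, hu₁⟩, flowPoly_addEdge M₂ ⟨v, hv₂⟩ ⟨u₂, hu₂⟩,
    Fintype.sum_mul_sum]
  rw [flowPoly_eq G, Finset.mul_sum]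
  rw [← Equiv.sum_comp e₀.finsetCongr]
  rw [← Equiv.sum_comp (finsetSumEquiv (α := ↥H₁.edges) (β := ↥H₂.edges ⊕ Unit)).symm]
  rw [Fintype.sum_prod_type]
  refine Finset.sum_congr rfl fun A₁ _ => ?_
  rw [← Equiv.sum_comp (finsetSumEquiv (α := ↥H₂.edges) (β := Unit)).symm]
  rw [Fintype.sum_prod_type]
  refine Finset.sum_congr rfl fun A₂ _ => ?_
  have hKrw : ∀ U : Finset Unit,
      e₀.finsetCongr (finsetSumEquiv.symm (A₁, finsetSumEquiv.symm (A₂, U))) =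
        (A₁.disjSum (A₂.disjSum U)).map e₀.toEmbedding := by
    intro U
    rw [Equiv.finsetCongr_apply]
    rfl
  rw [univ_finset_unit, Finset.sum_insert (by decide), Finset.sum_singleton]
  rw [hKrw, hKrw]
  -- identify the sets and cards
  obtain ⟨hglue, hreach⟩ := glue_lemma G H₁ H₂ v hvcover hvint hv₁ hv₂ ↑A₁ ↑A₂
  rw [← hM₁, ← hM₂] at hglue hreach
  set S : Set E := Subtype.val '' (↑A₁ : Set ↥H₁.edges) ∪ Subtype.val '' (↑A₂ : Set ↥H₂.edges)
    with hSdef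
  have hK0 : (↑((A₁.disjSum (A₂.disjSum (∅ : Finset Unit))).map e₀.toEmbedding) : Set E)
      = S := by
    ext x
    constructor
    · intro hx
      rw [Finset.mem_coe, Finset.mem_map] at hx
      obtain ⟨b, hb, rfl⟩ := hx
      rcases Finset.mem_disjSum.1 hb with ⟨a, ha, rfl⟩ | ⟨c, hc, rfl⟩
      · exact Or.inl ⟨a, ha, rfl⟩
      · rcases Finset.mem_disjSum.1 hc with ⟨a, ha, rfl⟩ | ⟨u, hu, rfl⟩
        · exact Or.inr ⟨a, ha, rfl⟩
        · exact absurd hu (Finset.notMem_empty u)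
    · rintro (⟨a, ha, rfl⟩ | ⟨a, ha, rfl⟩)
      · exact Finset.mem_coe.2 (Finset.mem_map.2
          ⟨Sum.inl a, Finset.mem_disjSum.2 (Or.inl ⟨a, ha, rfl⟩), rfl⟩)
      · exact Finset.mem_coe.2 (Finset.mem_map.2
          ⟨Sum.inr (Sum.inl a), Finset.mem_disjSum.2
            (Or.inr ⟨Sum.inl a, Finset.mem_disjSum.2 (Or.inl ⟨a, ha, rfl⟩), rfl⟩), rfl⟩)
  have hK1 : (↑((A₁.disjSum (A₂.disjSum ({()} : Finset Unit))).map e₀.toEmbedding) : Set E)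
      = insert e S := by
    ext x
    constructor
    · intro hx
      rw [Finset.mem_coe, Finset.mem_map] at hx
      obtain ⟨b, hb, rfl⟩ := hx
      rcases Finset.mem_disjSum.1 hb with ⟨a, ha, rfl⟩ | ⟨c, hc, rfl⟩
      · exact Or.inr (Or.inl ⟨a, ha, rfl⟩)
      · rcases Finset.mem_disjSum.1 hc with ⟨a, ha, rfl⟩ | ⟨u, hu, rfl⟩
        · exact Or.inr (Or.inr ⟨a, ha, rfl⟩)
        · exact Or.inl rfl
    · rintro (rfl | ⟨a, ha, rfl⟩ | ⟨a, ha, rfl⟩)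
      · exact Finset.mem_coe.2 (Finset.mem_map.2
          ⟨Sum.inr (Sum.inr ()), Finset.mem_disjSum.2
            (Or.inr ⟨Sum.inr (), Finset.mem_disjSum.2
              (Or.inr ⟨(), Finset.mem_singleton_self (), rfl⟩), rfl⟩), rfl⟩)
      · exact Finset.mem_coe.2 (Finset.mem_map.2
          ⟨Sum.inl a, Finset.mem_disjSum.2 (Or.inl ⟨a, ha, rfl⟩), rfl⟩)
      · exact Finset.mem_coe.2 (Finset.mem_map.2
          ⟨Sum.inr (Sum.inl a), Finset.mem_disjSum.2
            (Or.inr ⟨Sum.inl a, Finset.mem_disjSum.2 (Or.inl ⟨a, ha, rfl⟩), rfl⟩), rfl⟩)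
  have hc0 : ((A₁.disjSum (A₂.disjSum (∅ : Finset Unit))).map e₀.toEmbedding).card
      = A₁.card + A₂.card := by
    simp [Finset.card_disjSum]
  have hc1 : ((A₁.disjSum (A₂.disjSum ({()} : Finset Unit))).map e₀.toEmbedding).card
      = A₁.card + A₂.card + 1 := by
    simp [Finset.card_disjSum]
    omega
  have hbS : Nat.card V ≤ (A₁.card + A₂.card) + G.ncomp S := by
    have h := card_le_card_add_ncomp G ((A₁.disjSum (A₂.disjSum (∅ : Finset Unit))).map
      e₀.toEmbedding)
    rw [hc0, hK0] at h
    exact h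
  rw [hc0, hc1, hK0, hK1]
  have hb1 : Nat.card ↥H₁.verts ≤ A₁.card + M₁.ncomp ↑A₁ := card_le_card_add_ncomp M₁ A₁
  have hb2 : Nat.card ↥H₂.verts ≤ A₂.card + M₂.ncomp ↑A₂ := card_le_card_add_ncomp M₂ A₂
  have ha₁ : A₁.card ≤ Fintype.card ↥H₁.edges := by simpa using Finset.card_le_univ A₁
  have ha₂ : A₂.card ≤ Fintype.card ↥H₂.edges := by simpa using Finset.card_le_univ A₂
  have hrS : G.Reach S (G.fst e) (G.snd e) ↔
      (M₁.Reach ↑A₁ ⟨u₁, hu₁⟩ ⟨v, hv₁⟩ ∧ M₂.Reach ↑A₂ ⟨v, hv₂⟩ ⟨u₂, hu₂⟩) := by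
    rw [hre S]
    exact hreach u₁ u₂ hu₁ hu₂
  by_cases hc : G.Reach S (G.fst e) (G.snd e)
  · obtain ⟨hd₁, hd₂⟩ := hrS.1 hc
    rw [if_pos ((reach_comm M₁ ↑A₁ _ _).2 hd₁), if_pos hd₂,
      ncomp_insert_of_reach G S e hc]
    have eA : (A₁.card + A₂.card) + G.ncomp S - Nat.card V =
        (A₁.card + M₁.ncomp ↑A₁ - Nat.card ↥H₁.verts) +
        (A₂.card + M₂.ncomp ↑A₂ - Nat.card ↥H₂.verts) := by omega
    have eB : (A₁.card + A₂.card + 1) + G.ncomp S - Nat.card V =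
        ((A₁.card + M₁.ncomp ↑A₁ - Nat.card ↥H₁.verts) +
        (A₂.card + M₂.ncomp ↑A₂ - Nat.card ↥H₂.verts)) + 1 := by omega
    have eC : Fintype.card E - (A₁.card + A₂.card) =
        ((Fintype.card ↥H₁.edges - A₁.card) + (Fintype.card ↥H₂.edges - A₂.card)) + 1 := by
      omega
    have eD : Fintype.card E - (A₁.card + A₂.card + 1) =
        (Fintype.card ↥H₁.edges - A₁.card) + (Fintype.card ↥H₂.edges - A₂.card) := by omega
    rw [eA, eB, eC, eD]
    ring
  · have h2 := ncomp_insert_of_not_reach G S e hc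
    have hRHS : (if M₁.Reach ↑A₁ ⟨v, hv₁⟩ ⟨u₁, hu₁⟩ then
        (-1 : Polynomial ℝ) ^ (Fintype.card ↥H₁.edges - A₁.card) * (X - 1) *
          X ^ (A₁.card + M₁.ncomp ↑A₁ - Nat.card ↥H₁.verts) else 0) *
        (if M₂.Reach ↑A₂ ⟨v, hv₂⟩ ⟨u₂, hu₂⟩ then
        (-1 : Polynomial ℝ) ^ (Fintype.card ↥H₂.edges - A₂.card) * (X - 1) *
          X ^ (A₂.card + M₂.ncomp ↑A₂ - Nat.card ↥H₂.verts) else 0) = 0 := by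
      by_cases hd₁ : M₁.Reach ↑A₁ ⟨v, hv₁⟩ ⟨u₁, hu₁⟩
      · by_cases hd₂ : M₂.Reach ↑A₂ ⟨v, hv₂⟩ ⟨u₂, hu₂⟩
        · exact absurd (hrS.2 ⟨(reach_comm M₁ ↑A₁ _ _).1 hd₁, hd₂⟩) hc
        · rw [if_neg hd₂, mul_zero]
      · rw [if_neg hd₁, zero_mul]
    rw [hRHS]
    have e1 : (A₁.card + A₂.card + 1) + G.ncomp (insert e S) - Nat.card V =
        (A₁.card + A₂.card) + G.ncomp S - Nat.card V := by omega
    have e2 : Fintype.card E - (A₁.card + A₂.card) =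
        (Fintype.card E - (A₁.card + A₂.card + 1)) + 1 := by omega
    rw [e1, e2, pow_succ]
    ring
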